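/- If ∑xₙ is absolutely convergent with all xₙ ≠ 0, then the achievement set A(xₙ) = {∑_{n∈A} xₙ : A ⊆ ℕ} is a compact perfect subset of ℝ. -/

import Mathlib

open Filter Topology

lemma ach_summable (x : ℕ → ℝ) (habs : Summable fun n => |x n|) (A : Set ℕ) :
    Summable (A.indicator x) := by
  apply Summable.of_norm_bounded habs
  intro n
  by_cases h : n ∈ A <;> simp [Set.indicator, h, abs_nonneg]

lemma ach_tsum_singleton (x : ℕ → ℝ) (n : ℕ) :
    ∑' m, ({n} : Set ℕ).indicator x m = x n := by
  rw [tsum_eq_single n]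
  · simp [Set.indicator]
  · intro b hb; simp [Set.indicator, hb]

/-- If `∑ xₙ` is absolutely convergent with all `xₙ ≠ 0`, then the achievement set
`A(xₙ) = {∑_{n∈A} xₙ : A ⊆ ℕ}` is a compact perfect subset of `ℝ`. -/
theorem achievement_set_compact_perfect (x : ℕ → ℝ)
    (habs : Summable fun n => |x n|) (hne : ∀ n, x n ≠ 0) :
    IsCompact {y : ℝ | ∃ A : Set ℕ, y = ∑' n, A.indicator x n} ∧
      Perfect {y : ℝ | ∃ A : Set ℕ, y = ∑' n, A.indicator x n} := by
  classical
  set C := {y : ℝ | ∃ A : Set ℕ, y = ∑' n, A.indicator x n} with hC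
  -- C is the range of a continuous function on the compact space ℕ → Bool
  set f : (ℕ → Bool) → ℝ := fun b => ∑' n, if b n then x n else 0 with hf
  have hcont : Continuous f := by
    apply continuous_tsum (u := fun n => |x n|) _ habs
    · intro n b
      by_cases h : b n <;> simp [h, abs_nonneg]
    · intro n
      exact (continuous_of_discreteTopology
        (f := fun v : Bool => if v then x n else 0)).comp (continuous_apply n)
  have hrange : C = Set.range f := by
    ext y
    constructor
    · rintro ⟨A, rfl⟩
      refine ⟨fun n => decide (n ∈ A), ?_⟩
      simp only [hf]
      congr 1
      ext n
      by_cases h : n ∈ A <;> simp [Set.indicator, h]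
    · rintro ⟨b, rfl⟩
      refine ⟨{n | b n = true}, ?_⟩
      simp only [hf]
      congr 1
      ext n
      by_cases h : b n <;> simp [Set.indicator, h]
  have hcomp : IsCompact C := by
    rw [hrange]
    exact isCompact_range hcont
  refine ⟨hcomp, hcomp.isClosed, ?_⟩
  -- every point is an accumulation point
  intro y hy
  rw [accPt_iff_nhds]
  intro U hU
  obtain ⟨A, rfl⟩ := hy
  obtain ⟨ε, hε, hball⟩ := Metric.mem_nhds_iff.mp hU
  -- choose n with |x n| < ε
  obtain ⟨n, hn⟩ : ∃ n, |x n| < ε :=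
    (habs.tendsto_atTop_zero.eventually (gt_mem_nhds hε)).exists
  by_cases hmem : n ∈ A
  · -- remove n from A
    refine ⟨∑' m, (A \ {n}).indicator x m, ⟨?_, ⟨A \ {n}, rfl⟩⟩, ?_⟩
    · apply hball
      have hsplit : ∑' m, A.indicator x m
          = ∑' m, (A \ {n}).indicator x m + x n := by
        rw [← ach_tsum_singleton x n,
          ← Summable.tsum_add (ach_summable x habs _) (ach_summable x habs _)]
        congr 1
        ext m
        by_cases h1 : m = n
        · subst h1; simp [Set.indicator, hmem]
        · by_cases h2 : m ∈ A <;> simp [Set.indicator, h1, h2]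
      rw [Metric.mem_ball, hsplit, Real.dist_eq]
      simpa using hn
    · intro h
      have hsplit : ∑' m, A.indicator x m
          = ∑' m, (A \ {n}).indicator x m + x n := by
        rw [← ach_tsum_singleton x n,
          ← Summable.tsum_add (ach_summable x habs _) (ach_summable x habs _)]
        congr 1
        ext m
        by_cases h1 : m = n
        · subst h1; simp [Set.indicator, hmem]
        · by_cases h2 : m ∈ A <;> simp [Set.indicator, h1, h2]
      rw [h, left_eq_add] at hsplit
      exact hne n hsplit
  · -- add n to A
    refine ⟨∑' m, (A ∪ {n}).indicator x m, ⟨?_, ⟨A ∪ {n}, rfl⟩⟩, ?_⟩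
    · apply hball
      have hsplit : ∑' m, (A ∪ {n}).indicator x m
          = ∑' m, A.indicator x m + x n := by
        rw [← ach_tsum_singleton x n,
          ← Summable.tsum_add (ach_summable x habs _) (ach_summable x habs _)]
        congr 1
        ext m
        by_cases h1 : m = n
        · subst h1; simp [Set.indicator, hmem]
        · by_cases h2 : m ∈ A <;> simp [Set.indicator, h1, h2]
      rw [Metric.mem_ball, hsplit, Real.dist_eq]
      simpa using hn
    · intro h
      have hsplit : ∑' m, (A ∪ {n}).indicator x m
          = ∑' m, A.indicator x m + x n := by
        rw [← ach_tsum_singleton x n,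
          ← Summable.tsum_add (ach_summable x habs _) (ach_summable x habs _)]
        congr 1
        ext m
        by_cases h1 : m = n
        · subst h1; simp [Set.indicator, hmem]
        · by_cases h2 : m ∈ A <;> simp [Set.indicator, h1, h2]
      rw [h, left_eq_add] at hsplit
      exact hne n hsplit
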